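/- Let G be a chain mixed graph. If there is a collider trislide between nodes i and j in G such that there is an arrow from an inner node of the trislide to j (or, symmetrically, to i), and i and j are not adjacent in G, then G is not maximal; i.e., for every node set C disjoint from {i,j} there is a c-connecting walk between i and j given C. -/

import Mathlib

/-!
Common definitions: mixed graphs, walks, sections, colliders, c-separation, and the
marginalization / conditioning / anterial-graph algorithms of Sadeghi,
"Marginalization and conditioning for LWF chain graphs".
-/

namespace LWF

variable {V : Type*} {W : Type*}

/-- A mixed graph: a node set together with three edge relations
(lines `i — j`, arrows `i → j`, arcs `i ↔ j`). -/
structure MixedGraph (V : Type*) where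
  nodes : Set V
  line : V → V → Prop
  arrow : V → V → Prop
  arc : V → V → Prop

namespace MixedGraph

/-- The structural axioms of a (loopless) mixed graph: lines and arcs are symmetric,
all three relations are irreflexive, and edges join nodes of the graph. -/
def IsMixedGraph (G : MixedGraph V) : Prop :=
  (∀ i j, G.line i j → G.line j i) ∧ (∀ i, ¬ G.line i i) ∧
  (∀ i, ¬ G.arrow i i) ∧
  (∀ i j, G.arc i j → G.arc j i) ∧ (∀ i, ¬ G.arc i i) ∧
  (∀ i j, G.line i j → i ∈ G.nodes ∧ j ∈ G.nodes) ∧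
  (∀ i j, G.arrow i j → i ∈ G.nodes ∧ j ∈ G.nodes) ∧
  (∀ i j, G.arc i j → i ∈ G.nodes ∧ j ∈ G.nodes)

/-- `i` and `j` are adjacent: some edge joins them. -/
def adj (G : MixedGraph V) (i j : V) : Prop :=
  G.line i j ∨ G.arrow i j ∨ G.arrow j i ∨ G.arc i j

/-- A single step of a semi-directed walk: a line, or an arrow pointing forwards. -/
def sdStep (G : MixedGraph V) (i j : V) : Prop := G.line i j ∨ G.arrow i j

/-- `i` is an anterior of `j`: there is a (nontrivial) semi-directed walk from `i` to `j`;
by convention a node is not an anterior of itself. -/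
def anterior (G : MixedGraph V) (i j : V) : Prop :=
  i ≠ j ∧ Relation.TransGen G.sdStep i j

/-- The set of anteriors of a node. -/
def ant (G : MixedGraph V) (j : V) : Set V := {i | G.anterior i j}

/-- `ant(C) = (⋃ c ∈ C, ant(c)) \ C` -/
def antSet (G : MixedGraph V) (C : Set V) : Set V := (⋃ c ∈ C, G.ant c) \ C

/-- No semi-directed cycle containing at least one arrow: equivalently, there is no
arrow `a → b` together with a semi-directed walk from `b` back to `a`. -/
def NoArrowSemiDirectedCycle (G : MixedGraph V) : Prop :=
  ∀ a b, G.arrow a b → ¬ Relation.ReflTransGen G.sdStep b a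

/-- chain mixed graph -/
def IsCMG (G : MixedGraph V) : Prop := G.IsMixedGraph ∧ G.NoArrowSemiDirectedCycle

/-- chain graph: a CMG without arcs -/
def IsCG (G : MixedGraph V) : Prop := G.IsCMG ∧ ∀ i j, ¬ G.arc i j

/-- anterial graph: a CMG in which no arc has an endpoint that is an anterior of the
other endpoint -/
def IsAnG (G : MixedGraph V) : Prop :=
  G.IsCMG ∧ ∀ i j, G.arc i j → ¬ G.anterior i j

/-- `p` is a path consisting only of lines, from `a` to `b` (possibly a single node). -/
def lineSection (G : MixedGraph V) (p : List V) (a b : V) : Prop :=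
  p ≠ [] ∧ p.Chain' G.line ∧ p.Nodup ∧ p.head? = some a ∧ p.getLast? = some b

end MixedGraph

/-- The kind of a non-line connecting edge on a walk. -/
inductive Conn : Type
  | fwd   -- an arrow pointing forwards along the walk
  | bwd   -- an arrow pointing backwards along the walk
  | biarc -- an arc

/-- The connecting edge has an arrowhead pointing at the following section. -/
def Conn.headTowardsNext : Conn → Prop
  | .fwd => True
  | .bwd => False
  | .biarc => True

/-- The connecting edge has an arrowhead pointing at the preceding section. -/
def Conn.headTowardsPrev : Conn → Prop
  | .fwd => False
  | .bwd => True
  | .biarc => True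

/-- The connecting edge of kind `c` from `a` to `b` is present in `G`. -/
def MixedGraph.connOK (G : MixedGraph V) : Conn → V → V → Prop
  | .fwd, a, b => G.arrow a b
  | .bwd, a, b => G.arrow b a
  | .biarc, a, b => G.arc a b

/-- A walk in a mixed graph, presented by its (unique) decomposition into sections:
a first section followed by a list of non-line connecting edges, each with the next
section. Each section is a nonempty list of nodes joined by lines. -/
structure MWalk (V : Type*) where
  first : List V
  rest : List (Conn × List V)

namespace MWalk

/-- The list of sections of a walk. -/
def sections (w : MWalk V) : List (List V) := w.first :: w.rest.map Prod.snd

/-- The list of connecting (non-line) edges of a walk. -/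
def conns (w : MWalk V) : List Conn := w.rest.map Prod.fst

/-- The list of all nodes of a walk, in order. -/
def nodes (w : MWalk V) : List V := w.sections.flatten

/-- The inner nodes of a walk: all nodes except the two endpoints. -/
def innerNodes (w : MWalk V) : List V := (w.nodes.drop 1).dropLast

/-- The section with index `k` is a collider section of the walk: it is an inner
section and the connecting edges on both sides have an arrowhead pointing at it. -/
def colliderAt (w : MWalk V) (k : ℕ) : Prop :=
  0 < k ∧ k < w.conns.length ∧
  (∃ c, w.conns[k-1]? = some c ∧ c.headTowardsNext) ∧
  (∃ c, w.conns[k]? = some c ∧ c.headTowardsPrev)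

/-- There is an arrowhead pointing at the endpoint section containing the first node. -/
def headAtStart (w : MWalk V) : Prop :=
  ∃ c, w.conns[0]? = some c ∧ c.headTowardsPrev

/-- There is an arrowhead pointing at the endpoint section containing the last node. -/
def headAtEnd (w : MWalk V) : Prop :=
  ∃ c, w.conns[w.conns.length - 1]? = some c ∧ c.headTowardsNext

/-- The walk is `c`-connecting given `C`: every collider section contains a node of `C`
and no non-collider section contains a node of `C`. -/
def cConnecting (w : MWalk V) (C : Set V) : Prop :=
  (∀ k s, w.sections[k]? = some s → w.colliderAt k → ∃ x ∈ s, x ∈ C) ∧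
  (∀ k s, w.sections[k]? = some s → ¬ w.colliderAt k → ∀ x ∈ s, x ∉ C)

end MWalk

/-- Two walks between the same endpoints are endpoint-identical: one has an arrowhead
pointing at its endpoint section containing the first (resp. last) endpoint exactly when
the other does. -/
def EndpointIdentical (w₁ w₂ : MWalk V) : Prop :=
  (w₁.headAtStart ↔ w₂.headAtStart) ∧ (w₁.headAtEnd ↔ w₂.headAtEnd)

/-- Auxiliary: the tail of a walk is realized in `G`, starting at node `a`
and ending at node `j`. -/
def walkAux (G : MixedGraph V) : V → List (Conn × List V) → V → Prop
  | a, [], j => a = j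
  | a, (c, s) :: rest, j =>
      s ≠ [] ∧ s.Chain' G.line ∧
      (∃ b, s.head? = some b ∧ G.connOK c a b) ∧
      (∃ e, s.getLast? = some e ∧ walkAux G e rest j)

/-- `w` is a walk in `G` between `i` and `j` (read from `i` to `j`). -/
def MWalk.IsWalkFrom (w : MWalk V) (G : MixedGraph V) (i j : V) : Prop :=
  w.first ≠ [] ∧ w.first.Chain' G.line ∧ w.first.head? = some i ∧
  ∃ e, w.first.getLast? = some e ∧ walkAux G e w.rest j

namespace MixedGraph

/-- There is a `c`-connecting walk between `i` and `j` given `C` in `G`. -/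
def cConnect (G : MixedGraph V) (i j : V) (C : Set V) : Prop :=
  ∃ w : MWalk V, w.IsWalkFrom G i j ∧ w.cConnecting C

/-- `A ⊥_c B | C` in `G`. -/
def cSep (G : MixedGraph V) (A B C : Set V) : Prop :=
  ∀ i ∈ A, ∀ j ∈ B, ¬ G.cConnect i j C

/-- `edgeB G i j hi hj`: there is an edge between `i` and `j` in `G` with an arrowhead
at `i` iff `hi = true`, and an arrowhead at `j` iff `hj = true`. -/
def edgeB (G : MixedGraph V) (i j : V) : Bool → Bool → Prop
  | false, false => G.line i j
  | false, true => G.arrow i j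
  | true, false => G.arrow j i
  | true, true => G.arc i j

/-- A graph is maximal if every pair of distinct non-adjacent nodes is c-separated by
some node set. -/
def MaximalCMG (G : MixedGraph V) : Prop :=
  ∀ i ∈ G.nodes, ∀ j ∈ G.nodes, i ≠ j → ¬ G.adj i j →
    ∃ C : Set V, C ⊆ G.nodes ∧ i ∉ C ∧ j ∉ C ∧ ¬ G.cConnect i j C

/-- Delete the nodes in `M` together with all edges incident to them. -/
def deleteNodes (G : MixedGraph V) (M : Set V) : MixedGraph V where
  nodes := G.nodes \ M
  line i j := G.line i j ∧ i ∉ M ∧ j ∉ M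
  arrow i j := G.arrow i j ∧ i ∉ M ∧ j ∉ M
  arc i j := G.arc i j ∧ i ∉ M ∧ j ∉ M

/-! ### the marginalization algorithm -/

/-- Case 9 of step 1 of the marginalization algorithm: a collider trislide
`m → i — ⋯ — t ↔ j` with `m ∈ M` generates the arc `i ↔ j`. -/
def margGen9 (G : MixedGraph V) (M : Set V) (i j : V) : Prop :=
  ∃ m ∈ M, ∃ p t, G.arrow m i ∧ G.lineSection p i t ∧ G.arc t j ∧
    j ∉ p ∧ m ∉ p ∧ j ≠ m

/-- Step 1 of the marginalization algorithm: for every collider trislide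
`m → i — ⋯ — t ← j` (resp. `m → i — ⋯ — t ↔ j`) with endpoint `m ∈ M`, add the arrow
`j → i` (resp. the arc `i ↔ j`). -/
def margStep1 (G : MixedGraph V) (M : Set V) : MixedGraph V where
  nodes := G.nodes
  line := G.line
  arrow a b := G.arrow a b ∨
    ∃ m ∈ M, ∃ p t, G.arrow m b ∧ G.lineSection p b t ∧ G.arrow a t ∧
      a ∉ p ∧ m ∉ p ∧ a ≠ m
  arc a b := G.arc a b ∨ G.margGen9 M a b ∨ G.margGen9 M b a

end MixedGraph

/-- The kind of an edge. -/
inductive EKind : Type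
  | ln  -- a line
  | ar  -- an arrow
  | bi  -- an arc

/-- Step 2 of the marginalization algorithm, as a closure: starting from the edges of
`H`, repeatedly add, for every tripath with inner node `m ∈ M`, the edge given in
Table 1 (cases 1-7), until no new edge can be added. `MargCl H M EKind.ar a b` means:
an arrow from `a` to `b`. -/
inductive MargCl (H : MixedGraph V) (M : Set V) : EKind → V → V → Prop
  | base_ln {i j : V} : H.line i j → MargCl H M EKind.ln i j
  | base_ar {i j : V} : H.arrow i j → MargCl H M EKind.ar i j
  | base_bi {i j : V} : H.arc i j → MargCl H M EKind.bi i j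
  | symm_ln {i j : V} : MargCl H M EKind.ln i j → MargCl H M EKind.ln j i
  | symm_bi {i j : V} : MargCl H M EKind.bi i j → MargCl H M EKind.bi j i
  /-- `i ← m ← j` generates the arrow `j → i` -/
  | r1 {i j m : V} : m ∈ M → i ≠ j → MargCl H M EKind.ar j m →
      MargCl H M EKind.ar m i → MargCl H M EKind.ar j i
  /-- `i ← m — j` generates the arrow `j → i` -/
  | r2 {i j m : V} : m ∈ M → i ≠ j → MargCl H M EKind.ln m j →
      MargCl H M EKind.ar m i → MargCl H M EKind.ar j i
  /-- `i ↔ m — j` generates the arc `i ↔ j` -/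
  | r3 {i j m : V} : m ∈ M → i ≠ j → MargCl H M EKind.bi i m →
      MargCl H M EKind.ln m j → MargCl H M EKind.bi i j
  /-- `i ← m → j` generates the arc `i ↔ j` -/
  | r4 {i j m : V} : m ∈ M → i ≠ j → MargCl H M EKind.ar m i →
      MargCl H M EKind.ar m j → MargCl H M EKind.bi i j
  /-- `i ← m ↔ j` generates the arc `i ↔ j` -/
  | r5 {i j m : V} : m ∈ M → i ≠ j → MargCl H M EKind.ar m i →
      MargCl H M EKind.bi m j → MargCl H M EKind.bi i j
  /-- `i — m ← j` generates the arrow `j → i` -/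
  | r6 {i j m : V} : m ∈ M → i ≠ j → MargCl H M EKind.ln i m →
      MargCl H M EKind.ar j m → MargCl H M EKind.ar j i
  /-- `i — m — j` generates the line `i — j` -/
  | r7 {i j m : V} : m ∈ M → i ≠ j → MargCl H M EKind.ln i m →
      MargCl H M EKind.ln m j → MargCl H M EKind.ln i j

namespace MixedGraph

/-- The graph obtained after steps 1 and 2 of the marginalization algorithm. -/
def margCore (G : MixedGraph V) (M : Set V) : MixedGraph V where
  nodes := G.nodes
  line := MargCl (G.margStep1 M) M EKind.ln
  arrow := MargCl (G.margStep1 M) M EKind.ar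
  arc := MargCl (G.margStep1 M) M EKind.bi

/-- The marginalization algorithm `α_CMG(G; M, ∅)`. -/
def alphaMarg (G : MixedGraph V) (M : Set V) : MixedGraph V :=
  (G.margCore M).deleteNodes M

/-! ### the conditioning algorithm -/

/-- Step 2, case 4, of the conditioning algorithm: a collider trislide
`s ↔ b — ⋯ — t ← a` with `s ∈ S` generates the arrow `a → b`. -/
def condGenArrow (G : MixedGraph V) (S : Set V) (a b : V) : Prop :=
  ∃ s ∈ S, ∃ p t, G.arc s b ∧ G.lineSection p b t ∧ G.arrow a t ∧
    a ∉ p ∧ s ∉ p ∧ a ≠ s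

/-- Step 2, case 5, of the conditioning algorithm: a collider trislide
`s ↔ i — ⋯ — t ↔ j` with `s ∈ S` generates the arc `i ↔ j`. -/
def condGenArc (G : MixedGraph V) (S : Set V) (i j : V) : Prop :=
  ∃ s ∈ S, ∃ p t, G.arc s i ∧ G.lineSection p i t ∧ G.arc t j ∧
    j ∉ p ∧ s ∉ p ∧ j ≠ s

/-- The graph obtained after step 2 of the conditioning algorithm. -/
def condStep2 (G : MixedGraph V) (S : Set V) : MixedGraph V where
  nodes := G.nodes
  line := G.line
  arrow a b := G.arrow a b ∨ G.condGenArrow S a b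
  arc a b := G.arc a b ∨ G.condGenArc S a b ∨ G.condGenArc S b a

end MixedGraph

/-- Step 3 of the conditioning algorithm, as a closure: starting from the edges of `H`,
repeatedly add, for every collider trislide whose inner section has all its nodes in
`S`, the indicated edge; lines generated in this step are not used to form new
sections (sections are formed from the lines of `H` only). -/
inductive CondCl (H : MixedGraph V) (S : Set V) : EKind → V → V → Prop
  | base_ln {i j : V} : H.line i j → CondCl H S EKind.ln i j
  | base_ar {i j : V} : H.arrow i j → CondCl H S EKind.ar i j
  | base_bi {i j : V} : H.arc i j → CondCl H S EKind.bi i j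
  | symm_ln {i j : V} : CondCl H S EKind.ln i j → CondCl H S EKind.ln j i
  | symm_bi {i j : V} : CondCl H S EKind.bi i j → CondCl H S EKind.bi j i
  /-- `i → s — ⋯ — s ← j` generates the line `i — j` -/
  | rLL {i j a b : V} {p : List V} :
      H.lineSection p a b → (∀ x ∈ p, x ∈ S) → i ≠ j → i ∉ p → j ∉ p →
      CondCl H S EKind.ar i a → CondCl H S EKind.ar j b → CondCl H S EKind.ln i j
  /-- `i ↔ s — ⋯ — s ← j` generates the arrow `j → i` -/
  | rBL {i j a b : V} {p : List V} :
      H.lineSection p a b → (∀ x ∈ p, x ∈ S) → i ≠ j → i ∉ p → j ∉ p →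
      CondCl H S EKind.bi i a → CondCl H S EKind.ar j b → CondCl H S EKind.ar j i
  /-- `i ↔ s — ⋯ — s ↔ j` generates the arc `i ↔ j` -/
  | rBB {i j a b : V} {p : List V} :
      H.lineSection p a b → (∀ x ∈ p, x ∈ S) → i ≠ j → i ∉ p → j ∉ p →
      CondCl H S EKind.bi i a → CondCl H S EKind.bi j b → CondCl H S EKind.bi i j

namespace MixedGraph

/-- Step 4 of the conditioning algorithm: remove all arrowheads pointing at members of
`S`; arrows pointing at `S` become lines, and arcs with an endpoint in `S` become
arrows pointing away from that endpoint (arcs with both endpoints in `S` become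
lines). -/
def removeHeads (G : MixedGraph V) (S : Set V) : MixedGraph V where
  nodes := G.nodes
  line a b := G.line a b ∨ (G.arrow a b ∧ b ∈ S) ∨ (G.arrow b a ∧ a ∈ S) ∨
    (G.arc a b ∧ a ∈ S ∧ b ∈ S)
  arrow a b := (G.arrow a b ∧ b ∉ S) ∨ (G.arc a b ∧ a ∈ S ∧ b ∉ S)
  arc a b := G.arc a b ∧ a ∉ S ∧ b ∉ S

/-- The graph obtained after steps 1–3 of the conditioning algorithm. -/
def condCore (G : MixedGraph V) (C : Set V) : MixedGraph V where
  nodes := G.nodes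
  line := CondCl (G.condStep2 (C ∪ G.antSet C)) (C ∪ G.antSet C) EKind.ln
  arrow := CondCl (G.condStep2 (C ∪ G.antSet C)) (C ∪ G.antSet C) EKind.ar
  arc := CondCl (G.condStep2 (C ∪ G.antSet C)) (C ∪ G.antSet C) EKind.bi

/-- The conditioning algorithm `α_CMG(G; ∅, C)`. -/
def alphaCond (G : MixedGraph V) (C : Set V) : MixedGraph V :=
  ((G.condCore C).removeHeads (C ∪ G.antSet C)).deleteNodes C

/-- Simultaneous marginalization and conditioning:
`α_CMG(G; M, C) = α_CMG(α_CMG(G; M, ∅); ∅, C)`. -/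
def alphaCMG (G : MixedGraph V) (M C : Set V) : MixedGraph V :=
  (G.alphaMarg M).alphaCond C

/-! ### anterial graphs -/

/-- Step 3 of the anterial-graph algorithm: a trislide `a → t — ⋯ — b ↔ k` with
`k ∈ ant(b)` generates the arrow `a → b`. -/
def angGen3Arrow (H : MixedGraph V) (a b : V) : Prop :=
  ∃ p t k, H.arrow a t ∧ H.lineSection p t b ∧ H.arc b k ∧ H.anterior k b ∧
    a ∉ p ∧ k ∉ p ∧ a ≠ k

/-- Step 3 of the anterial-graph algorithm: a trislide `a ↔ t — ⋯ — b ↔ k` with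
`k ∈ ant(b)` generates the arc `a ↔ b`. -/
def angGen3Arc (H : MixedGraph V) (a b : V) : Prop :=
  ∃ p t k, H.arc a t ∧ H.lineSection p t b ∧ H.arc b k ∧ H.anterior k b ∧
    a ∉ p ∧ k ∉ p ∧ a ≠ k

/-- The graph obtained after step 3 of the anterial-graph algorithm applied to `H`. -/
def angStep3 (H : MixedGraph V) : MixedGraph V where
  nodes := H.nodes
  line := H.line
  arrow a b := H.arrow a b ∨ H.angGen3Arrow a b
  arc a b := H.arc a b ∨ H.angGen3Arc a b ∨ H.angGen3Arc b a

end MixedGraph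

/-- Step 4 of the anterial-graph algorithm, as a closure: repeatedly add, for every
trislide `j → k₁ — ⋯ — k_m ↔ i` (resp. `j ↔ k₁ — ⋯ — k_m ↔ i`) with some `k_r ∈ ant(i)`,
the arrow `j → i` (resp. the arc `j ↔ i`). -/
inductive AnGCl (H : MixedGraph V) : EKind → V → V → Prop
  | base_ln {i j : V} : H.line i j → AnGCl H EKind.ln i j
  | base_ar {i j : V} : H.arrow i j → AnGCl H EKind.ar i j
  | base_bi {i j : V} : H.arc i j → AnGCl H EKind.bi i j
  | symm_bi {i j : V} : AnGCl H EKind.bi i j → AnGCl H EKind.bi j i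
  /-- `j → k₁ — ⋯ — k_m ↔ i` with some `k_r ∈ ant(i)` generates the arrow `j → i` -/
  | r_ar {i j a b : V} {p : List V} :
      H.lineSection p a b → (∃ r ∈ p, H.anterior r i) → j ∉ p → i ∉ p → j ≠ i →
      AnGCl H EKind.ar j a → AnGCl H EKind.bi b i → AnGCl H EKind.ar j i
  /-- `j ↔ k₁ — ⋯ — k_m ↔ i` with some `k_r ∈ ant(i)` generates the arc `j ↔ i` -/
  | r_bi {i j a b : V} {p : List V} :
      H.lineSection p a b → (∃ r ∈ p, H.anterior r i) → j ∉ p → i ∉ p → j ≠ i →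
      AnGCl H EKind.bi j a → AnGCl H EKind.bi b i → AnGCl H EKind.bi j i

namespace MixedGraph

/-- The graph obtained after step 4 of the anterial-graph algorithm applied to `H`. -/
def angStep4Graph (H : MixedGraph V) : MixedGraph V where
  nodes := H.nodes
  line := AnGCl H EKind.ln
  arrow := AnGCl H EKind.ar
  arc := AnGCl H EKind.bi

/-- Step 5 of the anterial-graph algorithm: replace every arc `a ↔ b` with `a ∈ ant(b)`
by the arrow `a → b`, and by the line `a — b` if also `b ∈ ant(a)`. -/
def angStep5 (K : MixedGraph V) : MixedGraph V where
  nodes := K.nodes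
  line a b := K.line a b ∨ (K.arc a b ∧ K.anterior a b ∧ K.anterior b a)
  arrow a b := K.arrow a b ∨ (K.arc a b ∧ K.anterior a b ∧ ¬ K.anterior b a)
  arc a b := K.arc a b ∧ ¬ K.anterior a b ∧ ¬ K.anterior b a

/-- The operation `α_{CMG.AnG}`: steps 3, 4, and 5 of the anterial-graph algorithm. -/
def cmgToAnG (H : MixedGraph V) : MixedGraph V :=
  H.angStep3.angStep4Graph.angStep5

/-- The anterial-graph algorithm `α_AnG(G; M, C) = α_{CMG.AnG}(α_CMG(G; M, C))`. -/
def alphaAnG (G : MixedGraph V) (M C : Set V) : MixedGraph V :=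
  (G.alphaCMG M C).cmgToAnG

/-- A subprimitive inducing walk from `j` to `i` in `G`: a walk from `j` to `i` all of
whose (inner) sections are collider and have all their nodes in `ant(i)`. -/
def SubprimFrom (G : MixedGraph V) (w : MWalk V) (j i : V) : Prop :=
  w.IsWalkFrom G j i ∧
  (∀ k, 0 < k → k < w.conns.length → w.colliderAt k) ∧
  (∀ k s, 0 < k → k < w.conns.length → w.sections[k]? = some s →
    ∀ x ∈ s, G.anterior x i)

end MixedGraph

/-- The image of a mixed graph under a map of node sets. -/
def MixedGraph.gmap (f : V → W) (G : MixedGraph V) : MixedGraph W where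
  nodes := f '' G.nodes
  line a b := ∃ i j, G.line i j ∧ a = f i ∧ b = f j
  arrow a b := ∃ i j, G.arrow i j ∧ a = f i ∧ b = f j
  arc a b := ∃ i j, G.arc i j ∧ a = f i ∧ b = f j

end LWF

namespace LWF

variable {V : Type*}

/-- Auxiliary: a walk `i (c1) s (c2) j` with three sections `[i]`, `s`, `[j]` is
c-connecting given `C` provided the endpoints avoid `C` and the middle section is
handled appropriately according to whether it is a collider section. -/
private lemma cConnect_of_three (G : MixedGraph V) (i j : V) (C : Set V)
    (c1 c2 : Conn) (s : List V) (a b : V)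
    (hs : s ≠ []) (hchain : s.Chain' G.line)
    (hhead : s.head? = some a) (hlast : s.getLast? = some b)
    (h1 : G.connOK c1 i a) (h2 : G.connOK c2 b j)
    (hiC : i ∉ C) (hjC : j ∉ C)
    (hcol : c1.headTowardsNext → c2.headTowardsPrev → ∃ x ∈ s, x ∈ C)
    (hncol : ¬ (c1.headTowardsNext ∧ c2.headTowardsPrev) → ∀ x ∈ s, x ∉ C) :
    G.cConnect i j C := by
  refine ⟨⟨[i], [(c1, s), (c2, [j])]⟩, ?_, ?_, ?_⟩
  · exact ⟨by simp, List.isChain_singleton _, by simp, i, by simp,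
      hs, hchain, ⟨a, hhead, h1⟩, b, hlast, by simp, List.isChain_singleton _, ⟨j, rfl, h2⟩, j, rfl, rfl⟩
  · intro k sct hsk hck
    obtain ⟨hk0, hk2, ⟨cA, hcA, hA⟩, ⟨cB, hcB, hB⟩⟩ := hck
    simp only [MWalk.conns, List.map_cons, List.map_nil, List.length_cons,
      List.length_nil] at hk2 hcA hcB
    have hk1 : k = 1 := by omega
    subst hk1
    simp only [MWalk.sections, List.map_cons, List.map_nil] at hsk
    simp only [List.getElem?_cons_succ, List.getElem?_cons_zero] at hsk hcA hcB
    obtain rfl : s = sct := by simpa using hsk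
    obtain rfl : c1 = cA := by simpa using hcA
    obtain rfl : c2 = cB := by simpa using hcB
    exact hcol hA hB
  · intro k sct hsk hck x hx
    match k with
    | 0 =>
      simp only [MWalk.sections, List.map_cons, List.map_nil,
        List.getElem?_cons_zero] at hsk
      obtain rfl : [i] = sct := by simpa using hsk
      obtain rfl : x = i := by simpa using hx
      exact hiC
    | 1 =>
      simp only [MWalk.sections, List.map_cons, List.map_nil,
        List.getElem?_cons_succ, List.getElem?_cons_zero] at hsk
      obtain rfl : s = sct := by simpa using hsk
      have hnc : ¬ (c1.headTowardsNext ∧ c2.headTowardsPrev) := by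
        rintro ⟨hA, hB⟩
        exact hck ⟨Nat.one_pos, by simp [MWalk.conns],
          ⟨c1, by simp [MWalk.conns], hA⟩, ⟨c2, by simp [MWalk.conns], hB⟩⟩
      exact hncol hnc x hx
    | 2 =>
      simp only [MWalk.sections, List.map_cons, List.map_nil,
        List.getElem?_cons_succ, List.getElem?_cons_zero] at hsk
      obtain rfl : [j] = sct := by simpa using hsk
      obtain rfl : x = j := by simpa using hx
      exact hjC
    | (n + 3) =>
      simp [MWalk.sections] at hsk

/-- If there is a collider trislide between `i` and `j` (arc or arrow from `i` into the
section `p` from `a` to `b`, and arc or arrow from `j` into it) such that there is an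
arrow from an inner node of the trislide to `j` (or, symmetrically, to `i`), and `i`
and `j` are not adjacent, then `G` is not maximal: for every node set `C` disjoint from
`{i, j}` there is a `c`-connecting walk between `i` and `j` given `C`. -/
theorem stmt11 (G : MixedGraph V) (hG : G.IsCMG) (i j : V)
    (p : List V) (a b : V) (hsec : G.lineSection p a b)
    (hleft : G.arrow i a ∨ G.arc i a) (hright : G.arrow j b ∨ G.arc j b)
    (hip : i ∉ p) (hjp : j ∉ p) (hij : i ≠ j)
    (harr : (∃ k ∈ p, G.arrow k j) ∨ (∃ k ∈ p, G.arrow k i))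
    (hnadj : ¬ G.adj i j) :
    ∀ C : Set V, i ∉ C → j ∉ C → G.cConnect i j C := by
  obtain ⟨⟨_, _, _, hasymm, _, _, _, _⟩, _⟩ := hG
  obtain ⟨hpne, hpchain, hpnodup, hphead, hplast⟩ := hsec
  intro C hiC hjC
  by_cases hC : ∃ x ∈ p, x ∈ C
  · obtain ⟨x, hxp, hxC⟩ := hC
    have key : ∀ c1 c2, G.connOK c1 i a → G.connOK c2 b j →
        c1.headTowardsNext → c2.headTowardsPrev → G.cConnect i j C := fun c1 c2 h1 h2 hn hp' =>
      cConnect_of_three G i j C c1 c2 p a b hpne hpchain hphead hplast h1 h2 hiC hjC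
        (fun _ _ => ⟨x, hxp, hxC⟩) (fun h => absurd ⟨hn, hp'⟩ h)
    rcases hleft with h1 | h1 <;> rcases hright with h2 | h2
    · exact key .fwd .bwd h1 h2 trivial trivial
    · exact key .fwd .biarc h1 (hasymm _ _ h2) trivial trivial
    · exact key .biarc .bwd h1 h2 trivial trivial
    · exact key .biarc .biarc h1 (hasymm _ _ h2) trivial trivial
  · push_neg at hC
    rcases harr with ⟨k, hkp, hkj⟩ | ⟨k, hkp, hki⟩
    · obtain ⟨q, r, hp⟩ := List.append_of_mem hkp
      have hpre : (q ++ [k]) <+: p := ⟨r, by simp [hp]⟩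
      have hchain : (q ++ [k]).Chain' G.line := hpchain.prefix hpre
      have hhead : (q ++ [k]).head? = some a := by
        rw [hp] at hphead
        rcases q with _ | ⟨y, q⟩ <;> simp_all
      have hlast : (q ++ [k]).getLast? = some k := by simp
      have hmem : ∀ x ∈ q ++ [k], x ∈ p := by
        intro x hx
        rw [hp]
        simp only [List.mem_append, List.mem_singleton, List.mem_cons] at hx ⊢
        tauto
      have key : ∀ c1, G.connOK c1 i a → G.cConnect i j C := fun c1 h1 =>
        cConnect_of_three G i j C c1 .fwd (q ++ [k]) a k (by simp) hchain hhead hlast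
          h1 hkj hiC hjC (fun _ h => h.elim) (fun _ x hx => hC x (hmem x hx))
      rcases hleft with h1 | h1
      · exact key .fwd h1
      · exact key .biarc h1
    · obtain ⟨q, r, hp⟩ := List.append_of_mem hkp
      have hsuf : (k :: r) <:+ p := ⟨q, by simp [hp]⟩
      have hchain : (k :: r).Chain' G.line := hpchain.suffix hsuf
      have hhead : (k :: r).head? = some k := rfl
      have hlast : (k :: r).getLast? = some b := by
        rw [hp, List.getLast?_append] at hplast
        cases h' : (k :: r).getLast? with
        | none => exact absurd h' (by simp [List.getLast?_eq_none_iff])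
        | some y => rw [h'] at hplast; simpa using hplast
      have hmem : ∀ x ∈ k :: r, x ∈ p := by
        intro x hx
        rw [hp]
        simp only [List.mem_append, List.mem_cons] at hx ⊢
        tauto
      have key : ∀ c2, G.connOK c2 b j → G.cConnect i j C := fun c2 h2 =>
        cConnect_of_three G i j C .bwd c2 (k :: r) k b (by simp) hchain hhead hlast
          hki h2 hiC hjC (fun h _ => h.elim) (fun _ x hx => hC x (hmem x hx))
      rcases hright with h2 | h2
      · exact key .bwd h2
      · exact key .biarc (hasymm _ _ h2)

end LWF
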